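/- arXiv:1812.06386 — 7 statements merged into one kernel-verified Lean document; each statement's English description precedes it below -/
import Mathlib

section
/- Let μ be an infinite cardinal and k a positive natural number. Then μ →_hc (μ)²_k holds: for every coloring c : [μ]² → k there exist a color i < k and a set B ⊆ μ with |B| = μ such that the i-monochromatic graph on B is highly connected (i.e., μ-connected). -/
open Cardinal

/-- The `ξ`-monochromatic graph determined by the pair-coloring `c`:
vertices `a ≠ b` are adjacent iff `c` gives the pair `{a, b}` the color `ξ`. -/
def monoGraph {V K : Type} (c : Sym2 V → K) (ξ : K) : SimpleGraph V where
  Adj a b := a ≠ b ∧ c s(a, b) = ξ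
  symm := by
    constructor
    intro a b h
    exact ⟨h.1.symm, by rw [Sym2.eq_swap]; exact h.2⟩
  loopless := by
    constructor
    intro a h
    exact h.1 rfl

/-- The graph `G`, restricted to the vertex set `X`, is `κ`-connected:
deleting any set of fewer than `κ` vertices leaves it connected. -/
def KConnOn {V : Type} (G : SimpleGraph V) (X : Set V) (κ : Cardinal) : Prop :=
  ∀ S : Set V, S ⊆ X → #S < κ → (G.induce (X \ S)).Connected

/-- `ν →_{κ-c} (μ)²_λ`: every coloring of the edges of the complete graph on `ν`
by `λ` many colors admits a color `ξ` and a size-`μ` set of vertices on which the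
`ξ`-monochromatic graph is `κ`-connected. -/
def ArrowConn (ν μ κ lam : Cardinal) : Prop :=
  ∀ (V K : Type), #V = ν → #K = lam → ∀ c : Sym2 V → K,
    ∃ (ξ : K) (X : Set V), #X = μ ∧ KConnOn (monoGraph c ξ) X κ

/-- `ν →_{hc} (μ)²_λ`, i.e. `ν →_{μ-c} (μ)²_λ`: there is a size-`μ`
monochromatic subgraph which is highly connected. -/
def ArrowHC (ν μ lam : Cardinal) : Prop := ArrowConn ν μ μ lam

lemma exists_uniform_ultrafilter {V : Type} (μ : Cardinal) (hμ : ℵ₀ ≤ μ) (hV : #V = μ) :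
    ∃ U : Ultrafilter V, ∀ A : Set V, #(↑Aᶜ : Type) < μ → A ∈ U := by
  let F : Filter V :=
    { sets := {A | #(↑Aᶜ) < μ}
      univ_sets := by
        simp only [Set.mem_setOf_eq, Set.compl_univ, Cardinal.mk_emptyCollection]
        exact lt_of_lt_of_le aleph0_pos hμ
      sets_of_superset := by
        intro A B hA hAB
        simp only [Set.mem_setOf_eq] at *
        exact lt_of_le_of_lt (Cardinal.mk_le_mk_of_subset (Set.compl_subset_compl.mpr hAB)) hA
      inter_sets := by
        intro A B hA hB
        simp only [Set.mem_setOf_eq] at *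
        rw [Set.compl_inter]
        exact lt_of_le_of_lt (Cardinal.mk_union_le _ _) (Cardinal.add_lt_of_lt hμ hA hB) }
  have hne : F.NeBot := by
    constructor
    intro h
    have : (∅ : Set V) ∈ F := h ▸ Filter.mem_bot
    simp only [F, Filter.mem_mk, Set.mem_setOf_eq, Set.compl_empty, Cardinal.mk_univ, hV] at this
    exact lt_irrefl _ this
  exact ⟨Ultrafilter.of F, fun A hA => Ultrafilter.of_le F hA⟩

lemma mem_uniform_card {V : Type} {μ : Cardinal} (hV : #V = μ)
    {U : Ultrafilter V} (hU : ∀ A : Set V, #(↑Aᶜ : Type) < μ → A ∈ U)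
    {A : Set V} (hA : A ∈ U) : #A = μ := by
  rcases lt_or_ge (#A) μ with h | h
  · exact absurd (hU Aᶜ (by rwa [compl_compl])) (Ultrafilter.compl_notMem_iff.mpr hA)
  · refine le_antisymm ?_ h
    calc #A ≤ #V := Cardinal.mk_set_le A
    _ = μ := hV

/-- Proposition 2 (Bergfalk–Hrušák–Shelah): if `μ` is an infinite cardinal and
`k` a positive natural number, then `μ →_hc (μ)²_k`. -/
theorem stmt0 (μ : Cardinal) (hμ : ℵ₀ ≤ μ) (k : ℕ) (hk : 0 < k) :
    ArrowHC μ μ (k : Cardinal) := by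
  intro V K hV hK c
  have hKfin : Finite K := by
    rw [← Cardinal.lt_aleph0_iff_finite, hK]; exact Cardinal.nat_lt_aleph0 k
  obtain ⟨U, hU⟩ := exists_uniform_ultrafilter μ hμ hV
  have hpart : ∀ f : V → K, ∃ ξ : K, f ⁻¹' {ξ} ∈ U := by
    intro f
    obtain ⟨ξ, hξ⟩ := Ultrafilter.eq_pure_of_finite (U.map f)
    refine ⟨ξ, Ultrafilter.mem_map.mp ?_⟩
    rw [hξ]; exact Filter.singleton_mem_pure
  choose g hg using fun u : V => hpart (fun w => c s(u, w))
  obtain ⟨ξ, hξ⟩ := hpart g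
  set X : Set V := g ⁻¹' {ξ} with hXdef
  refine ⟨ξ, X, mem_uniform_card hV hU hξ, ?_⟩
  intro S hS hScard
  have hXS : (X \ S : Set V) ∈ U := by
    apply U.inter_mem hξ
    exact hU Sᶜ (by rwa [compl_compl])
  have hne : (X \ S : Set V).Nonempty := Ultrafilter.nonempty_of_mem hXS
  have : Nonempty ↥(X \ S) := hne.to_subtype
  constructor
  rintro ⟨u, hu⟩ ⟨v, hv⟩
  by_cases huv : u = v
  · subst huv
    rfl
  · have hWmem : ((fun w => c s(u, w)) ⁻¹' {g u}) ∩ ((fun w => c s(v, w)) ⁻¹' {g v})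
        ∩ (X \ S) ∩ ({u, v} : Set V)ᶜ ∈ U := by
      refine U.inter_mem (U.inter_mem (U.inter_mem (hg u) (hg v)) hXS) (hU _ ?_)
      rw [compl_compl]
      exact lt_of_lt_of_le (((Set.finite_singleton v).insert u).lt_aleph0) hμ
    obtain ⟨w, hw⟩ := Ultrafilter.nonempty_of_mem hWmem
    obtain ⟨⟨⟨hw1, hw2⟩, hw3⟩, hw4⟩ := hw
    have hwu : w ≠ u := fun h => hw4 (by simp [h])
    have hwv : w ≠ v := fun h => hw4 (by simp [h])
    have hgu : g u = ξ := hu.1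
    have hgv : g v = ξ := hv.1
    have adj1 : ((monoGraph c ξ).induce (X \ S)).Adj ⟨u, hu⟩ ⟨w, hw3⟩ :=
      ⟨fun h => hwu h.symm, by simpa [hgu] using hw1⟩
    have adj2 : ((monoGraph c ξ).induce (X \ S)).Adj ⟨w, hw3⟩ ⟨v, hv⟩ := by
      refine ⟨hwv, ?_⟩
      rw [Sym2.eq_swap]
      simpa [hgv] using hw2
    exact (adj1.reachable).trans adj2.reachable
end

section
/- Let μ be an infinite cardinal and λ a nonzero cardinal with λ < cf(μ). Then μ →_{1-c} (μ)²_λ holds: for every coloring c : [μ]² → λ there exist a color ξ < λ and a set X ⊆ μ with |X| = μ such that the ξ-monochromatic graph on X is connected. -/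
open Cardinal

/-- If `μ` is infinite and `0 < λ < cf(μ)`, then `μ →_{1-c} (μ)²_λ`:
some color class contains a connected subgraph on `μ` many vertices. -/
theorem stmt1 (μ lam : Cardinal) (hμ : ℵ₀ ≤ μ) (hlam : lam ≠ 0)
    (hcof : lam < μ.ord.cof) :
    ArrowConn μ μ 1 lam := by
  intro V K hV hK c
  have hinf : Infinite V := Cardinal.infinite_iff.mpr (hV ▸ hμ)
  obtain ⟨v⟩ : Nonempty V := inferInstance
  have hcompl : #(({v}ᶜ : Set V)) = μ := by
    rw [Cardinal.mk_compl_of_infinite, hV]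
    rw [hV, Cardinal.mk_singleton]
    exact lt_of_lt_of_le Cardinal.one_lt_aleph0 hμ
  set f : ({v}ᶜ : Set V) → K := fun w => c s(v, w.1) with hf
  have hpig : ∃ ξ : K, #(f ⁻¹' {ξ}) = #(({v}ᶜ : Set V)) := by
    apply Cardinal.infinite_pigeonhole
    · rw [hcompl]; exact hμ
    · rw [hK, hcompl]; exact hcof
  obtain ⟨ξ, hξ⟩ := hpig
  refine ⟨ξ, (Subtype.val '' (f ⁻¹' {ξ})) ∪ {v}, ?_, ?_⟩
  · apply le_antisymm
    · rw [← hV]; exact Cardinal.mk_set_le _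
    · calc μ = #(f ⁻¹' {ξ}) := by rw [hξ, hcompl]
        _ = #(Subtype.val '' (f ⁻¹' {ξ})) := (Cardinal.mk_image_eq Subtype.val_injective).symm
        _ ≤ _ := Cardinal.mk_le_mk_of_subset Set.subset_union_left
  · intro S hS hS1
    have hSe : S = ∅ := by
      rw [← Set.isEmpty_coe_sort, ← Cardinal.mk_eq_zero_iff, ← Cardinal.lt_one_iff_zero]
      exact hS1
    subst hSe
    rw [Set.diff_empty]
    set X : Set V := (Subtype.val '' (f ⁻¹' {ξ})) ∪ {v} with hX
    have hvX : v ∈ X := Or.inr rfl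
    have key : ∀ x : X, ((monoGraph c ξ).induce X).Reachable x ⟨v, hvX⟩ := by
      rintro ⟨x, hx⟩
      rcases hx with hx | hx
      · obtain ⟨w, hw, hwx⟩ := hx
        apply SimpleGraph.Adj.reachable
        refine ⟨?_, ?_⟩
        · subst hwx; exact w.2
        · rw [Sym2.eq_swap]
          subst hwx
          exact hw
      · have hxv : x = v := hx
        subst hxv
        exact SimpleGraph.Reachable.refl _
    rw [SimpleGraph.connected_iff]
    exact ⟨fun a b => (key a).trans (key b).symm, ⟨⟨v, hvX⟩⟩⟩
end

section
/- For every infinite cardinal λ there exists a single coloring c : [λ⁺]² → λ such that for every cardinal μ with 3 ≤ μ ≤ λ⁺, every color ξ < λ, and every set X ⊆ λ⁺ with |X| = μ, the ξ-monochromatic graph on X is not highly connected. In particular λ⁺ →_hc (μ)²_λ fails for every μ ≥ 3. -/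
open Cardinal

lemma monoGraph_adj {V K : Type} (c : Sym2 V → K) (ξ : K) {a b : V} :
    (monoGraph c ξ).Adj a b ↔ a ≠ b ∧ c s(a, b) = ξ := Iff.rfl

open SimpleGraph in
lemma mono_isAcyclic {V K : Type} [LinearOrder V] (c : Sym2 V → K) (ξ : K)
    (hinj : ∀ a b₁ b₂ : V, b₁ < a → b₂ < a →
      c s(a, b₁) = ξ → c s(a, b₂) = ξ → b₁ = b₂) :
    (monoGraph c ξ).IsAcyclic := by
  classical
  intro u w hw
  have hns : w.support.toFinset.Nonempty :=
    ⟨u, List.mem_toFinset.mpr w.start_mem_support⟩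
  set m := w.support.toFinset.max' hns with hmdef
  have hmmem : m ∈ w.support := List.mem_toFinset.mp (w.support.toFinset.max'_mem hns)
  have hle : ∀ x ∈ w.support, x ≤ m := fun x hx =>
    Finset.le_max' _ x (List.mem_toFinset.mpr hx)
  set W := w.rotate m hmmem with hWdef
  have hW : W.IsCycle := hw.rotate hmmem
  have hWle : ∀ x ∈ W.support, x ≤ m := by
    intro x hx
    rw [Walk.support_eq_cons] at hx
    rcases List.mem_cons.mp hx with rfl | hx
    · exact le_refl _
    · exact hle x (List.mem_of_mem_tail
        (((Walk.support_rotate w m hmmem).mem_iff).mp hx))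
  have hnn := hW.not_nil
  rw [Walk.not_nil_iff] at hnn
  obtain ⟨x, hmx, q, hWeq⟩ := hnn
  rw [hWeq] at hW hWle
  rw [Walk.cons_isCycle_iff] at hW
  obtain ⟨hq, hes⟩ := hW
  have hqrnn : ¬ q.reverse.Nil := Walk.not_nil_of_ne hmx.ne
  rw [Walk.not_nil_iff] at hqrnn
  obtain ⟨y, hmy, q', hq'eq⟩ := hqrnn
  have hyq : s(m, y) ∈ q.edges := by
    have : s(m, y) ∈ q.reverse.edges := by
      rw [hq'eq, Walk.edges_cons]; exact List.mem_cons_self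
    rwa [Walk.edges_reverse, List.mem_reverse] at this
  have hyx : y ≠ x := by
    rintro rfl
    exact hes hyq
  have hxlt : x < m := lt_of_le_of_ne
    (hWle x (by rw [Walk.support_cons]; exact List.mem_cons_of_mem _ q.start_mem_support))
    hmx.ne'
  have hylt : y < m := lt_of_le_of_ne
    (hWle y (by
      rw [Walk.support_cons]
      exact List.mem_cons_of_mem _ (Walk.snd_mem_support_of_mem_edges q hyq)))
    hmy.ne'
  exact hyx (hinj m y x hylt hxlt hmy.2 hmx.2)

open SimpleGraph in
lemma exists_two_nbrs {V : Type} {G : SimpleGraph V} (hc : G.Connected) (h3 : 3 ≤ #V) :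
    ∃ v a b : V, a ≠ b ∧ G.Adj v a ∧ G.Adj v b := by
  by_contra h
  have hsub : ∀ v a b : V, G.Adj v a → G.Adj v b → a = b := by
    intro v a b hva hvb
    by_contra hne
    exact h ⟨v, a, b, hne, hva, hvb⟩
  have hne : Nonempty V := hc.nonempty
  let x : V := Classical.arbitrary V
  obtain ⟨y, hyx, -⟩ := Cardinal.three_le h3 x x
  obtain ⟨z, hzx, hzy⟩ := Cardinal.three_le h3 x y
  have wxy : G.Walk x y := (hc.preconnected x y).some
  have hwnn : ¬ wxy.Nil := Walk.not_nil_of_ne (fun hh => hyx hh.symm)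
  rw [Walk.not_nil_iff] at hwnn
  obtain ⟨x', hxx', -, -⟩ := hwnn
  have key : ∀ {u t : V} (_ : G.Walk u t), u = x ∨ u = x' → t = x ∨ t = x' := by
    intro u t w
    induction w with
    | nil => exact id
    | cons hab w ih =>
      intro ha
      apply ih
      rcases ha with rfl | rfl
      · exact Or.inr (hsub _ _ _ hab hxx')
      · exact Or.inl (hsub _ _ _ hab hxx'.symm)
  have hy2 : y = x ∨ y = x' := key (hc.preconnected x y).some (Or.inl rfl)
  have hz2 : z = x ∨ z = x' := key (hc.preconnected x z).some (Or.inl rfl)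
  rcases hy2 with rfl | rfl
  · exact hyx rfl
  · rcases hz2 with rfl | h2
    · exact hzx rfl
    · exact hzy h2

def inclHom {V : Type} (G : SimpleGraph V) (s : Set V) : G.induce s →g G :=
  ⟨Subtype.val, fun h => h⟩


noncomputable def ekColoring {V K : Type} [LinearOrder V]
    (f : ∀ a : V, {b : V // b < a} ↪ K) (k₀ : K) : Sym2 V → K :=
  Sym2.lift ⟨fun a b =>
    if h : b < a then f a ⟨b, h⟩ else if h' : a < b then f b ⟨a, h'⟩ else k₀, by
    intro a b
    dsimp only
    rcases lt_trichotomy a b with h | rfl | h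
    · simp [h, asymm h]
    · simp
    · simp [h, asymm h]⟩

lemma ekColoring_lt {V K : Type} [LinearOrder V]
    (f : ∀ a : V, {b : V // b < a} ↪ K) (k₀ : K) {a b : V} (h : b < a) :
    ekColoring f k₀ s(a, b) = f a ⟨b, h⟩ := by
  rw [ekColoring, Sym2.lift_mk]
  exact dif_pos h

lemma not_kconn {V K : Type} [LinearOrder V] (c : Sym2 V → K) (ξ : K)
    (hinj : ∀ a b₁ b₂ : V, b₁ < a → b₂ < a →
      c s(a, b₁) = ξ → c s(a, b₂) = ξ → b₁ = b₂)
    (μ : Cardinal) (hμ : 3 ≤ μ) (X : Set V) (hX : #X = μ) :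
    ¬ KConnOn (monoGraph c ξ) X μ := by
  classical
  intro h
  set G := monoGraph c ξ with hG
  have hac := mono_isAcyclic c ξ hinj
  have h0 : (G.induce X).Connected := by
    have h00 := h ∅ (Set.empty_subset X) (by
      rw [Cardinal.mk_emptyCollection]
      exact lt_of_lt_of_le (by norm_num) hμ)
    rwa [Set.diff_empty] at h00
  have h3X : (3 : Cardinal) ≤ #X := hX ▸ hμ
  obtain ⟨v', a', b', hab', hva', hvb'⟩ := exists_two_nbrs h0 h3X
  have hva : G.Adj v'.val a'.val := hva'
  have hvb : G.Adj v'.val b'.val := hvb'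
  have h1 : (G.induce (X \ {v'.val})).Connected := by
    apply h {v'.val} (by simpa using v'.2)
    rw [Cardinal.mk_singleton]
    exact lt_of_lt_of_le (by norm_num) hμ
  have haX : a'.val ∈ X \ {v'.val} := ⟨a'.2, by simpa using hva.ne'⟩
  have hbX : b'.val ∈ X \ {v'.val} := ⟨b'.2, by simpa using hvb.ne'⟩
  have w0 : (G.induce (X \ {v'.val})).Walk ⟨a'.val, haX⟩ ⟨b'.val, hbX⟩ :=
    (h1.preconnected _ _).some
  let w1 : G.Walk a'.val b'.val := w0.map (inclHom G _)
  have hv1 : v'.val ∉ w1.support := by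
    intro hmem
    change v'.val ∈ (w0.map (inclHom G _)).support at hmem
    rw [SimpleGraph.Walk.support_map] at hmem
    obtain ⟨u, hu, huv⟩ := List.mem_map.mp hmem
    exact u.2.2 (by simp only [Set.mem_singleton_iff]; exact huv)
  let p := w1.toPath
  have hvp : v'.val ∉ p.val.support := fun hh =>
    hv1 (SimpleGraph.Walk.support_toPath_subset w1 hh)
  have hp2 : (SimpleGraph.Walk.cons hva p.val).IsPath := p.2.cons hvp
  have heq := hac.path_unique (SimpleGraph.Path.singleton hvb)
    ⟨SimpleGraph.Walk.cons hva p.val, hp2⟩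
  have hlen := congrArg (fun P : G.Path v'.val b'.val => P.val.length) heq
  simp only [SimpleGraph.Path.singleton, SimpleGraph.Walk.length_cons,
    SimpleGraph.Walk.length_nil] at hlen
  have hplen : p.val.length = 0 := by omega
  have hab : a'.val = b'.val := SimpleGraph.Walk.eq_of_length_eq_zero hplen
  exact hab' (Subtype.ext hab)


/-- The Erdős–Kakutani coloring shows even that `λ⁺ ↛_hc (μ)²_λ` for every `μ ≥ 3`:
a single coloring of the pairs from `λ⁺` by `λ` colors admits, for no cardinal
`3 ≤ μ ≤ λ⁺`, a size-`μ` monochromatic highly connected (i.e. `μ`-connected) subgraph.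
In particular `λ⁺ →_hc (μ)²_λ` fails for every `μ ≥ 3`. -/
theorem stmt4 (lam : Cardinal) (hlam : ℵ₀ ≤ lam) :
    (∀ (V K : Type), #V = Order.succ lam → #K = lam →
      ∃ c : Sym2 V → K, ∀ (μ : Cardinal) (ξ : K) (X : Set V),
        3 ≤ μ → μ ≤ Order.succ lam → #X = μ →
          ¬ KConnOn (monoGraph c ξ) X μ) ∧
    (∀ μ : Cardinal, 3 ≤ μ → ¬ ArrowHC (Order.succ lam) μ lam) := by
  have part1 : ∀ (V K : Type), #V = Order.succ lam → #K = lam →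
      ∃ c : Sym2 V → K, ∀ (μ : Cardinal) (ξ : K) (X : Set V),
        3 ≤ μ → μ ≤ Order.succ lam → #X = μ →
          ¬ KConnOn (monoGraph c ξ) X μ := by
    intro V K hV hK
    have hO : #((Order.succ lam).ord.ToType) = Order.succ lam := by
      rw [Cardinal.mk_toType, Cardinal.card_ord]
    obtain ⟨e⟩ : Nonempty (V ≃ (Order.succ lam).ord.ToType) :=
      Cardinal.eq.mp (hV.trans hO.symm)
    letI : LinearOrder V := LinearOrder.lift' e e.injective
    have hlt : ∀ a b : V, a < b ↔ e a < e b := fun a b => Iff.rfl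
    have hK0 : Nonempty K := by
      rw [← Cardinal.mk_ne_zero_iff] at *
      rw [hK]
      exact ne_of_gt (lt_of_lt_of_le aleph0_pos hlam)
    have hch : ∀ a : V, Nonempty ({b : V // b < a} ↪ K) := by
      intro a
      rw [← Cardinal.le_def, hK]
      have h1 : #{b : V // b < a} ≤ #(Set.Iio (e a)) := by
        apply Cardinal.mk_le_of_injective (f := fun b => ⟨e b.1, (hlt b.1 a).mp b.2⟩)
        intro b1 b2 hb
        have : e b1.1 = e b2.1 := congrArg Subtype.val hb
        exact Subtype.ext (e.injective this)
      have h2 : #(Set.Iio (e a)) < Order.succ lam := Cardinal.mk_Iio_toType_ord_lt (e a)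
      exact h1.trans (Order.lt_succ_iff.mp h2)
    let f : ∀ a : V, {b : V // b < a} ↪ K := fun a => (hch a).some
    refine ⟨ekColoring f (Classical.arbitrary K), ?_⟩
    intro μ ξ X hμ3 hμs hXμ
    apply not_kconn _ ξ ?_ μ hμ3 X hXμ
    intro a b1 b2 hb1 hb2 hc1 hc2
    rw [ekColoring_lt f _ hb1] at hc1
    rw [ekColoring_lt f _ hb2] at hc2
    have := (f a).injective (hc1.trans hc2.symm)
    exact congrArg Subtype.val this
  refine ⟨part1, ?_⟩
  intro μ hμ harrow
  have hVO : #((Order.succ lam).ord.ToType) = Order.succ lam := by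
    rw [Cardinal.mk_toType, Cardinal.card_ord]
  have hKT : #(lam.ord.ToType) = lam := by
    rw [Cardinal.mk_toType, Cardinal.card_ord]
  obtain ⟨c, hc⟩ := part1 _ _ hVO hKT
  obtain ⟨ξ, X, hX, hconn⟩ := harrow _ _ hVO hKT c
  refine hc μ ξ X hμ ?_ hX hconn
  rw [← hX] at *
  calc #X ≤ #((Order.succ lam).ord.ToType) := Cardinal.mk_set_le X
    _ = Order.succ lam := hVO
end

section
/- Let λ be an infinite cardinal and μ an infinite cardinal with μ ≤ 2^λ. Then μ →_hc (μ)²_λ fails: there exists a coloring c : [μ]² → λ × 2 (a set of colors of cardinality λ, since λ is infinite) such that for no color (ξ, i) ∈ λ × 2 and no set X ⊆ μ with |X| = μ is the (ξ,i)-monochromatic graph on X highly connected. -/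
open Cardinal

private noncomputable def minOf {K : Type} [Nonempty K] (s : Set K) : K :=
  letI := Classical.dec s.Nonempty
  if hne : s.Nonempty then
    (IsWellFounded.wf (r := WellOrderingRel (α := K))).min s hne
  else Classical.arbitrary K

private lemma minOf_mem {K : Type} [Nonempty K] {s : Set K} (hs : s.Nonempty) :
    minOf s ∈ s := by
  have h := (IsWellFounded.wf (r := WellOrderingRel (α := K))).min_mem s hs
  simp only [minOf, dif_pos hs]
  exact h

/-- Least coordinate (w.r.t. a fixed well-ordering of `K`) where two functions
`K → Bool` differ (junk value if they agree everywhere). -/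
private noncomputable def leastDiff {K : Type} [Nonempty K] (g h : K → Bool) : K :=
  minOf {ξ | g ξ ≠ h ξ}

private lemma leastDiff_symm {K : Type} [Nonempty K] (g h : K → Bool) :
    leastDiff g h = leastDiff h g :=
  congrArg minOf (Set.ext fun _ => ne_comm)

private lemma leastDiff_mem {K : Type} [Nonempty K] {g h : K → Bool} (hne : g ≠ h) :
    g (leastDiff g h) ≠ h (leastDiff g h) := by
  have hs : {ξ | g ξ ≠ h ξ}.Nonempty := by
    obtain ⟨ξ, hξ⟩ := Function.ne_iff.mp hne
    exact ⟨ξ, hξ⟩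
  exact minOf_mem hs

private lemma not_connected_of_isolated {V : Type} (G : SimpleGraph V) (Y : Set V)
    (hY : 1 < #Y) {b : V} (hb : b ∈ Y)
    (hiso : ∀ z ∈ Y, ¬ G.Adj b z) : ¬ (G.induce Y).Connected := by
  intro h
  have : Nontrivial Y := Cardinal.one_lt_iff_nontrivial.mp hY
  obtain ⟨a, ha⟩ := exists_ne (⟨b, hb⟩ : Y)
  obtain ⟨w⟩ := h.preconnected ⟨b, hb⟩ a
  cases w with
  | nil => exact ha rfl
  | cons hadj p =>
    rename_i v
    exact hiso v.1 v.2 hadj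

private lemma key (lam μ : Cardinal) (hlam : ℵ₀ ≤ lam) (hμ : ℵ₀ ≤ μ)
    (hle : μ ≤ 2 ^ lam) (V K : Type) (hV : #V = μ) (hK : #K = lam) :
    ∃ c : Sym2 V → K × Bool, ∀ (d : K × Bool) (X : Set V), #X = μ →
      ¬ KConnOn (monoGraph c d) X μ := by
  classical
  have hKne : Nonempty K := by
    rw [← Cardinal.mk_ne_zero_iff, hK]
    exact (aleph0_pos.trans_le hlam).ne'
  have hcard : #V ≤ #(K → Bool) := by
    rw [hV, ← Cardinal.power_def, hK, Cardinal.mk_bool]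
    exact hle
  obtain ⟨f⟩ := (Cardinal.le_def _ _).mp hcard
  have hW : #(μ.ord.ToType) = μ := by rw [Cardinal.mk_toType, Cardinal.card_ord]
  obtain ⟨e⟩ := Cardinal.eq.mp (hV.trans hW.symm)
  set g : V → V → K × Bool := fun a b =>
    (leastDiff (f a) (f b), f (if e a ≤ e b then a else b) (leastDiff (f a) (f b)))
    with hgdef
  have hg : ∀ a b, g a b = g b a := by
    intro a b
    have h1 : leastDiff (f a) (f b) = leastDiff (f b) (f a) := leastDiff_symm _ _
    have h2 : (if e a ≤ e b then a else b) = (if e b ≤ e a then b else a) := by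
      rcases lt_trichotomy (e a) (e b) with h | h | h
      · rw [if_pos h.le, if_neg (not_le.mpr h)]
      · rw [e.injective h]
      · rw [if_neg (not_le.mpr h), if_pos h.le]
    show (leastDiff (f a) (f b), f (if e a ≤ e b then a else b) (leastDiff (f a) (f b)))
      = (leastDiff (f b) (f a), f (if e b ≤ e a then b else a) (leastDiff (f b) (f a)))
    rw [h1, h2]
  refine ⟨Sym2.lift ⟨g, hg⟩, ?_⟩
  rintro ⟨ξ, i⟩ X hX hcon
  have hAdj : ∀ a b : V, (monoGraph (Sym2.lift ⟨g, hg⟩) (ξ, i)).Adj a b →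
      f a ξ ≠ f b ξ ∧ f (if e a ≤ e b then a else b) ξ = i := by
    intro a b hab
    obtain ⟨hne, hcol⟩ := hab
    rw [Sym2.lift_mk] at hcol
    have hcol' : (leastDiff (f a) (f b),
        f (if e a ≤ e b then a else b) (leastDiff (f a) (f b))) = (ξ, i) := hcol
    rw [Prod.mk.injEq] at hcol'
    obtain ⟨h1, h2⟩ := hcol'
    have hfne : f a ≠ f b := fun h' => hne (f.injective h')
    constructor
    · rw [← h1]
      exact leastDiff_mem hfne
    · rw [h1] at h2
      exact h2
  have hbig : ∀ S : Set V, S ⊆ X → #S < μ → 1 < #(X \ S : Set V) := by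
    intro S hS hSlt
    by_contra hcontra
    push_neg at hcontra
    have hXle : #X ≤ #S + #(X \ S : Set V) := by
      calc #X = #(S ∪ X \ S : Set V) := by rw [Set.union_diff_cancel hS]
        _ ≤ #S + #(X \ S : Set V) := Cardinal.mk_union_le _ _
    have hlt : #S + #(X \ S : Set V) < μ :=
      Cardinal.add_lt_of_lt hμ hSlt
        (hcontra.trans_lt (Cardinal.one_lt_aleph0.trans_le hμ))
    exact absurd (hX ▸ hXle) hlt.not_ge
  by_cases hB : ∃ b ∈ X, f b ξ ≠ i
  · obtain ⟨b, hbX, hbB⟩ := hB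
    set S : Set V := {x ∈ X | e x < e b} with hSdef
    have hS : S ⊆ X := fun x hx => hx.1
    have hSlt : #S < μ := by
      have hinj : #S ≤ #(Set.Iio (e b)) := by
        refine Cardinal.mk_le_of_injective
          (f := fun x : S => (⟨e x.1, x.2.2⟩ : Set.Iio (e b))) ?_
        intro x y hxy
        exact Subtype.ext (e.injective (Subtype.ext_iff.mp hxy))
      exact hinj.trans_lt (Cardinal.mk_Iio_ord_toType (e b))
    have hbY : b ∈ X \ S := ⟨hbX, fun hbS => lt_irrefl _ hbS.2⟩
    refine not_connected_of_isolated _ _ (hbig S hS hSlt) hbY ?_ (hcon S hS hSlt)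
    intro z hz hadjz
    obtain ⟨hne1, hcond⟩ := hAdj b z hadjz
    by_cases hle' : e b ≤ e z
    · rw [if_pos hle'] at hcond
      exact hbB hcond
    · exact hz.2 ⟨hz.1, not_le.mp hle'⟩
  · push_neg at hB
    have h0 : (∅ : Set V) ⊆ X := Set.empty_subset X
    have h0lt : #(∅ : Set V) < μ := by
      simpa using aleph0_pos.trans_le hμ
    have hXne : X.Nonempty := by
      rw [← Set.nonempty_coe_sort, ← Cardinal.mk_ne_zero_iff, hX]
      exact (aleph0_pos.trans_le hμ).ne'
    obtain ⟨b, hbX⟩ := hXne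
    refine not_connected_of_isolated _ _ (hbig ∅ h0 h0lt)
      (⟨hbX, Set.notMem_empty b⟩ : b ∈ X \ ∅) ?_ (hcon ∅ h0 h0lt)
    intro z hz hadjz
    obtain ⟨hne1, _⟩ := hAdj b z hadjz
    exact hne1 ((hB b hbX).trans (hB z hz.1).symm)

/-- Proposition 4 (Sierpiński-style coloring): if `λ` is infinite and
`ℵ₀ ≤ μ ≤ 2^λ`, then `μ →_hc (μ)²_λ` fails: there is a coloring of the pairs
from `μ` by `λ × 2` many colors (a set of `λ` many colors, as `λ` is infinite)
no color class of which contains a highly connected subgraph on `μ` many vertices. -/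
theorem stmt5 (lam μ : Cardinal) (hlam : ℵ₀ ≤ lam) (hμ : ℵ₀ ≤ μ)
    (hle : μ ≤ 2 ^ lam) :
    (∀ (V K : Type), #V = μ → #K = lam →
      ∃ c : Sym2 V → K × Bool, ∀ (d : K × Bool) (X : Set V), #X = μ →
        ¬ KConnOn (monoGraph c d) X μ) ∧
    ¬ ArrowHC μ μ lam := by
  refine ⟨fun V K hV hK => key lam μ hlam hμ hle V K hV hK, ?_⟩
  intro h
  obtain ⟨c, hc⟩ := key lam μ hlam hμ hle (Quotient.out μ) (Quotient.out lam)
    (Cardinal.mk_out μ) (Cardinal.mk_out lam)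
  have hK2 : #(Quotient.out lam × Bool) = lam := by
    have h2 : (2 : Cardinal) ≤ lam :=
      le_trans (le_of_lt (by exact_mod_cast Cardinal.nat_lt_aleph0 2)) hlam
    rw [Cardinal.mk_prod]
    simp only [Cardinal.lift_id, Cardinal.mk_out, Cardinal.mk_bool]
    exact Cardinal.mul_eq_left hlam h2 two_ne_zero
  obtain ⟨ξ, X, hX1, hX2⟩ := h (Quotient.out μ) (Quotient.out lam × Bool)
    (Cardinal.mk_out μ) hK2 c
  exact hc ξ X hX1 hX2
end

section
/- Let ν be an infinite cardinal, let μ = cf(ν) be its cofinality, and let λ be a cardinal. If μ →_hc (μ)²_λ fails (i.e., there exists a coloring c : [μ]² → λ such that for no ξ < λ and no X ⊆ μ with |X| = μ is the ξ-monochromatic graph on X highly connected), then ν →_hc (ν)²_λ fails (i.e., there exists a coloring d : [ν]² → λ such that for no ξ < λ and no Y ⊆ ν with |Y| = ν is the ξ-monochromatic graph on Y highly connected). -/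
open Cardinal

/-- Transfer of reachability along a map that sends edges to edges-or-equalities. -/
lemma reach_map {α β : Type} {G : SimpleGraph α} {H : SimpleGraph β} (f : α → β)
    (hf : ∀ a b, G.Adj a b → f a = f b ∨ H.Adj (f a) (f b)) {a b : α}
    (h : G.Reachable a b) : H.Reachable (f a) (f b) := by
  obtain ⟨w⟩ := h
  induction w with
  | nil => exact SimpleGraph.Reachable.refl _
  | cons hadj _ ih =>
    rcases hf _ _ hadj with he | he
    · rw [he] at *; exact ih
    · exact (SimpleGraph.Adj.reachable he).trans ih

/-- Lemma 5: let `ν` be infinite and `μ = cf(ν)` its cofinality. If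
`μ →_hc (μ)²_λ` fails then `ν →_hc (ν)²_λ` fails. -/
theorem stmt6 (ν lam : Cardinal) (hν : ℵ₀ ≤ ν)
    (h : ¬ ArrowHC ν.ord.cof ν.ord.cof lam) :
    ¬ ArrowHC ν ν lam := by
  classical
  intro H
  apply h
  intro V' K hV' hK c'
  have hlim : Order.IsSuccLimit ν.ord := Cardinal.isSuccLimit_ord hν
  have hμ : ℵ₀ ≤ ν.ord.cof := Ordinal.aleph0_le_cof.2 hlim
  have hV'ne : Nonempty V' := by
    rw [← Cardinal.mk_ne_zero_iff, hV']
    exact (lt_of_lt_of_le Cardinal.aleph0_pos hμ).ne'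
  obtain ⟨v0⟩ := hV'ne
  set ξ0 : K := c' s(v0, v0) with hξ0
  -- a cofinal family indexed by `V'`
  obtain ⟨ι, f, hlsub, hι⟩ := Ordinal.exists_lsub_cof ν.ord
  obtain ⟨e⟩ : Nonempty (V' ≃ ι) := by
    rw [← Cardinal.eq, hV', hι]
  set g : V' → Ordinal := f ∘ e with hg
  have hglt : ∀ i, g i < ν.ord := fun i => hlsub ▸ Ordinal.lt_lsub f (e i)
  -- the vertex set upstairs
  set V : Type := ν.ord.ToType with hVdef
  have hVcard : #V = ν := by rw [hVdef, Cardinal.mk_toType, Cardinal.card_ord]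
  set rk : V → Ordinal := fun v => ((Ordinal.ToType.mk (o := ν.ord)).symm v : Ordinal)
    with hrk
  have hrklt : ∀ v, rk v < ν.ord := fun v => ((Ordinal.ToType.mk (o := ν.ord)).symm v).2
  have hpv : ∀ v : V, ∃ i : V', rk v ≤ g i := by
    intro v
    have h1 : rk v < Ordinal.lsub f := hlsub ▸ hrklt v
    obtain ⟨i, hi⟩ := Ordinal.lt_lsub_iff.1 h1
    exact ⟨e.symm i, by simpa [hg] using hi⟩
  choose p hp using hpv
  -- the key smallness property of fibers of `p`
  have hsmall : ∀ A : Set V', #A < ν.ord.cof → #(p ⁻¹' A) < ν := by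
    intro A hA
    set β : Ordinal := ⨆ i : A, (Order.succ (g i)) with hβdef
    have hβ : β < ν.ord :=
      Ordinal.iSup_lt_ord hA fun i => hlim.succ_lt (hglt i)
    have hsub : ∀ v ∈ p ⁻¹' A, rk v < β := by
      intro v hv
      have h1 : rk v ≤ g (p v) := hp v
      have h2 : g (p v) < Order.succ (g (p v)) := Order.lt_succ _
      have h3 : Order.succ (g (p v)) ≤ β :=
        Ordinal.le_iSup (fun i : A => Order.succ (g i)) ⟨p v, hv⟩
      exact lt_of_le_of_lt h1 (lt_of_lt_of_le h2 h3)
    have hinj : #(p ⁻¹' A) ≤ #β.ToType := by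
      apply Cardinal.mk_le_of_injective
        (f := fun v : p ⁻¹' A => Ordinal.ToType.mk (o := β) ⟨rk v, hsub v v.2⟩)
      intro v₁ v₂ hvv
      have := (Ordinal.ToType.mk (o := β)).injective hvv
      have hval : rk (v₁ : V) = rk (v₂ : V) := Subtype.mk_eq_mk.mp this
      have : ((Ordinal.ToType.mk (o := ν.ord)).symm (v₁ : V))
          = ((Ordinal.ToType.mk (o := ν.ord)).symm (v₂ : V)) := Subtype.ext hval
      exact Subtype.ext ((Ordinal.ToType.mk (o := ν.ord)).symm.injective this)
    rw [Cardinal.mk_toType] at hinj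
    exact lt_of_le_of_lt hinj (Cardinal.lt_ord.1 hβ)
  -- the coloring upstairs
  set d : Sym2 V → K := fun z => if (z.map p).IsDiag then ξ0 else c' (z.map p)
    with hd
  have hdval : ∀ a b : V, p a ≠ p b → d s(a, b) = c' s(p a, p b) := by
    intro a b hab
    rw [hd]
    simp only [Sym2.map_pair_eq]
    rw [if_neg (by rwa [Sym2.mk_isDiag_iff])]
  obtain ⟨ξ, Y, hYcard, hYconn⟩ := H V K hVcard hK d
  refine ⟨ξ, p '' Y, ?_, ?_⟩
  · -- the image has cardinality exactly the cofinality
    refine le_antisymm ((Cardinal.mk_set_le _).trans_eq hV') ?_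
    by_contra hlt
    push_neg at hlt
    have h1 : #(p ⁻¹' (p '' Y)) < ν := hsmall _ hlt
    have h2 : Y ⊆ p ⁻¹' (p '' Y) := Set.subset_preimage_image p Y
    have h3 : #Y < ν := lt_of_le_of_lt (Cardinal.mk_le_mk_of_subset h2) h1
    exact absurd hYcard h3.ne
  · -- high connectivity of the image
    intro S hS hScard
    set T : Set V := Y ∩ p ⁻¹' S with hT
    have hTcard : #T < ν :=
      lt_of_le_of_lt (Cardinal.mk_le_mk_of_subset Set.inter_subset_right)
        (hsmall S hScard)
    have hconn := hYconn T Set.inter_subset_left (hYcard ▸ hTcard)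
    -- the projection map between the induced graphs
    have hqmem : ∀ y : (Y \ T : Set V), p y ∈ (p '' Y \ S : Set V') := by
      intro y
      refine ⟨Set.mem_image_of_mem p y.2.1, fun hc => y.2.2 ⟨y.2.1, hc⟩⟩
    set q : (Y \ T : Set V) → ((p '' Y \ S : Set V')) :=
      fun y => ⟨p y, hqmem y⟩ with hq
    have hqsurj : Function.Surjective q := by
      rintro ⟨x, ⟨⟨y, hy, rfl⟩, hxS⟩⟩
      refine ⟨⟨y, hy, fun hc => hxS hc.2⟩, rfl⟩
    have hhom : ∀ a b : (Y \ T : Set V),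
        ((monoGraph d ξ).induce (Y \ T)).Adj a b →
        q a = q b ∨ ((monoGraph c' ξ).induce (p '' Y \ S)).Adj (q a) (q b) := by
      intro a b hadj
      have hadj' : (monoGraph d ξ).Adj (a : V) (b : V) := hadj
      by_cases hpeq : p (a : V) = p (b : V)
      · exact Or.inl (Subtype.ext hpeq)
      · right
        refine ⟨hpeq, ?_⟩
        have := hadj'.2
        rwa [hdval _ _ hpeq] at this
    rw [SimpleGraph.connected_iff]
    constructor
    · intro x₁ x₂
      obtain ⟨y₁, rfl⟩ := hqsurj x₁
      obtain ⟨y₂, rfl⟩ := hqsurj x₂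
      exact reach_map q hhom (hconn.preconnected y₁ y₂)
    · obtain ⟨y⟩ := hconn.nonempty
      exact ⟨q y⟩
end

section
/- Let ν be an uncountable cardinal and μ < ν a cardinal such that 2^μ < ν and such that for every cardinal λ < ν, every coloring d : [ν]⁴ → λ admits a set H ⊆ ν with |H| = ν on which d is constant (both hold when ν is weakly compact). Then for every family {u_{α,β} : α < β < ν} of subsets of ν, each of cardinality at most μ, there exist a set B ⊆ ν with |B| = ν and sets V⁺_α, V⁻_α ⊆ ν for α ∈ B such that: (1) for each α ∈ B, the family {u_{α,β} : β ∈ B, β > α} is a Δ-system with root V⁺_α; (2) for each β ∈ B, the family {u_{α,β} : α ∈ B, α < β} is a Δ-system with root V⁻_β; (3) each of the families {V⁺_α : α ∈ B}, {V⁻_α : α ∈ B}, and {V⁻_α ∪ V⁺_α : α ∈ B} forms a Δ-system; (4) the sets u_{α,β} ∖ (V⁺_α ∪ V⁻_β), for α < β in B, are pairwise disjoint. -/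
open Cardinal

set_option synthInstance.maxSize 1000

set_option maxHeartbeats 1000000

def mk4 (p q r s : Ordinal.{0}) : Fin 4 → Ordinal.{0}
  | 0 => p
  | 1 => q
  | 2 => r
  | 3 => s

lemma mk4_lt {p q r s : Ordinal.{0}} (h1 : p < q) (h2 : q < r) (h3 : r < s) :
    ∀ i j : Fin 4, i < j → mk4 p q r s i < mk4 p q r s j := by
  intro i j hij
  fin_cases i <;> fin_cases j <;>
    first
      | exact absurd hij (by decide)
      | exact h1
      | exact h2
      | exact h3
      | exact h1.trans h2
      | exact h2.trans h3
      | exact (h1.trans h2).trans h3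

lemma mk4_mem {S : Set Ordinal.{0}} {p q r s : Ordinal.{0}}
    (hp : p ∈ S) (hq : q ∈ S) (hr : r ∈ S) (hs : s ∈ S) :
    ∀ m : Fin 4, mk4 p q r s m ∈ S := by
  intro m; fin_cases m <;> assumption



/-- Lemma 8 (two-dimensional Δ-system lemma). Let `ν` be an uncountable cardinal
and `μ < ν` with `2^μ < ν`, and suppose that every coloring of the 4-element
subsets of `ν` by fewer than `ν` colors has a homogeneous set of size `ν` (as
holds when `ν` is weakly compact). Then every family `{u α β : α < β < ν}` of
subsets of `ν` of size at most `μ` admits a `B ⊆ ν` of size `ν` and roots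
`Vp α`, `Vm β` satisfying the Δ-system conditions (1)-(4). -/
theorem stmt9 (ν μ : Cardinal.{0}) (hν : ℵ₀ < ν) (hμν : μ < ν) (hexp : 2 ^ μ < ν)
    (hwc : ∀ (L : Type), #L < ν → ∀ d : Finset Ordinal.{0} → L,
      ∃ H : Set Ordinal, H ⊆ Set.Iio ν.ord ∧ #H = Cardinal.lift.{1} ν ∧
        ∀ s t : Finset Ordinal, s.card = 4 → t.card = 4 →
          ↑s ⊆ H → ↑t ⊆ H → d s = d t)
    (u : Ordinal.{0} → Ordinal.{0} → Set Ordinal.{0})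
    (hu : ∀ α β : Ordinal, α < β → β < ν.ord →
      u α β ⊆ Set.Iio ν.ord ∧ #(u α β) ≤ Cardinal.lift.{1} μ) :
    ∃ (B : Set Ordinal) (Vp Vm : Ordinal → Set Ordinal),
      B ⊆ Set.Iio ν.ord ∧ #B = Cardinal.lift.{1} ν ∧
      -- (1) for each `α ∈ B`, `{u α β : β ∈ B, β > α}` is a Δ-system with root `Vp α`
      (∀ α ∈ B, ∀ β ∈ B, ∀ β' ∈ B, α < β → α < β' → β ≠ β' →
        u α β ∩ u α β' = Vp α) ∧
      -- (2) for each `β ∈ B`, `{u α β : α ∈ B, α < β}` is a Δ-system with root `Vm β`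
      (∀ β ∈ B, ∀ α ∈ B, ∀ α' ∈ B, α < β → α' < β → α ≠ α' →
        u α β ∩ u α' β = Vm β) ∧
      -- (3) `{Vp α}`, `{Vm α}` and `{Vm α ∪ Vp α}` each form Δ-systems
      (∃ r, ∀ α ∈ B, ∀ α' ∈ B, α ≠ α' → Vp α ∩ Vp α' = r) ∧
      (∃ r, ∀ α ∈ B, ∀ α' ∈ B, α ≠ α' → Vm α ∩ Vm α' = r) ∧
      (∃ r, ∀ α ∈ B, ∀ α' ∈ B, α ≠ α' → (Vm α ∪ Vp α) ∩ (Vm α' ∪ Vp α') = r) ∧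
      -- (4) the sets `u α β \ (Vp α ∪ Vm β)` are pairwise disjoint
      (∀ α ∈ B, ∀ β ∈ B, ∀ α' ∈ B, ∀ β' ∈ B, α < β → α' < β' →
        (α, β) ≠ (α', β') →
          (u α β \ (Vp α ∪ Vm β)) ∩ (u α' β' \ (Vp α' ∪ Vm β')) = ∅) := by
    classical
  have hI : #(μ.out) = μ := mk_out μ
  have hFex : ∀ a b : Ordinal.{0}, ∃ g : μ.out → Option Ordinal.{0},
      a < b → b < ν.ord → ∀ x, x ∈ u a b ↔ ∃ i, g i = some x := by
    intro a b
    by_cases h : a < b ∧ b < ν.ord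
    · have hle : #(u a b) ≤ #(ULift.{1} μ.out) := by
        rw [mk_uLift, hI]; exact (hu a b h.1 h.2).2
      obtain ⟨j⟩ := (le_def _ _).1 hle
      refine ⟨fun i => if h' : ∃ y : u a b, j y = ⟨i⟩ then some (h'.choose : Ordinal) else none,
        fun _ _ x => ?_⟩
      constructor
      · intro hx
        refine ⟨(j ⟨x, hx⟩).down, ?_⟩
        have h' : ∃ y : u a b, j y = ⟨(j ⟨x, hx⟩).down⟩ := ⟨⟨x, hx⟩, rfl⟩
        dsimp only
        rw [dif_pos h']
        have h2 : j h'.choose = j ⟨x, hx⟩ := by rw [h'.choose_spec]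
        rw [j.injective h2]
      · intro ⟨i, hi⟩
        dsimp only at hi
        by_cases h' : ∃ y : u a b, j y = ⟨i⟩
        · rw [dif_pos h'] at hi
          have : (h'.choose : Ordinal) = x := by simpa using hi
          rw [← this]; exact h'.choose.2
        · rw [dif_neg h'] at hi; simp at hi
    · exact ⟨fun _ => none, fun h1 h2 => absurd ⟨h1, h2⟩ h⟩
  choose F hF using hFex
  have hL : #(Fin 4 → Fin 4 → Fin 4 → Fin 4 → μ.out → μ.out → Prop) < ν := by
    rcases lt_or_ge μ ℵ₀ with hfin | hinf
    · haveI : Finite μ.out := by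
        rw [← Cardinal.lt_aleph0_iff_finite, hI]; exact hfin
      exact (Cardinal.lt_aleph0_of_finite _).trans hν
    · have e1 : #(μ.out → Prop) = 2 ^ μ := by rw [mk_arrow, mk_Prop, hI]; simp
      have e2 : #(μ.out → μ.out → Prop) = 2 ^ (μ * μ) := by
        rw [mk_arrow, e1, hI, power_mul]; simp
      have e3 : ∀ (X : Type) (c : Cardinal.{0}), #X = 2 ^ c → #(Fin 4 → X) = 2 ^ (c * 4) := by
        intro X c hX
        rw [mk_arrow, hX, power_mul]; simp
      have e6 : #(Fin 4 → Fin 4 → Fin 4 → Fin 4 → μ.out → μ.out → Prop)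
          = 2 ^ (μ * μ * 4 * 4 * 4 * 4) := by
        rw [e3 _ _ (e3 _ _ (e3 _ _ (e3 _ _ e2)))]
      have hμμ : μ * μ * 4 * 4 * 4 * 4 = μ := by
        have h4 : (4 : Cardinal) ≤ μ := by
          exact le_trans (le_of_lt (by exact_mod_cast Cardinal.nat_lt_aleph0 4)) hinf
        have h40 : (4 : Cardinal) ≠ 0 := by norm_num
        rw [mul_eq_self hinf]
        rw [mul_eq_left hinf h4 h40, mul_eq_left hinf h4 h40, mul_eq_left hinf h4 h40,
          mul_eq_left hinf h4 h40]
      rw [e6, hμμ]; exact hexp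
  obtain ⟨H, hHsub, hHcard, hhom⟩ := hwc _ hL
    (fun s i j k l ξ η => ∃ (h : s.card = 4), ∃ y : Ordinal,
      F (s.orderEmbOfFin h i) (s.orderEmbOfFin h j) ξ = some y ∧
      F (s.orderEmbOfFin h k) (s.orderEmbOfFin h l) η = some y)
  have hlt : ∀ {z : Ordinal}, z ∈ H → z < ν.ord := fun hz => hHsub hz
  have memu : ∀ {a b : Ordinal}, a ∈ H → b ∈ H → a < b →
      ∀ {x : Ordinal}, x ∈ u a b ↔ ∃ i, F a b i = some x :=
    fun {a b} _ hb hab {x} => hF a b hab (hlt hb) x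
  -- the master transfer lemma
  have key : ∀ a t : Fin 4 → Ordinal,
      (∀ i j : Fin 4, i < j → a i < a j) → (∀ i j : Fin 4, i < j → t i < t j) →
      (∀ m, a m ∈ H) → (∀ m, t m ∈ H) →
      ∀ i j k l : Fin 4, i < j → k < l → t i = a i → t j = a j →
      ∀ x : Ordinal, x ∈ u (a i) (a j) → x ∈ u (a k) (a l) → x ∈ u (t k) (t l) := by
    intro a t ha ht haH htH i j k l hij hkl hti htj x hx1 hx2
    have hamono : StrictMono a := fun p q h => ha p q h
    have htmono : StrictMono t := fun p q h => ht p q h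
    set sa : Finset Ordinal := Finset.image a Finset.univ with hsadef
    set st : Finset Ordinal := Finset.image t Finset.univ with hstdef
    have hca : sa.card = 4 := by
      rw [hsadef, Finset.card_image_of_injective _ hamono.injective, Finset.card_univ,
        Fintype.card_fin]
    have hct : st.card = 4 := by
      rw [hstdef, Finset.card_image_of_injective _ htmono.injective, Finset.card_univ,
        Fintype.card_fin]
    have hea : ⇑(sa.orderEmbOfFin hca) = a :=
      (Finset.orderEmbOfFin_unique hca
        (fun m => Finset.mem_image_of_mem a (Finset.mem_univ m)) hamono).symm
    have het : ⇑(st.orderEmbOfFin hct) = t :=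
      (Finset.orderEmbOfFin_unique hct
        (fun m => Finset.mem_image_of_mem t (Finset.mem_univ m)) htmono).symm
    have hsaH : ↑sa ⊆ H := by
      rw [hsadef, Finset.coe_image, Finset.coe_univ, Set.image_univ]
      rintro y ⟨m, rfl⟩; exact haH m
    have hstH : ↑st ⊆ H := by
      rw [hstdef, Finset.coe_image, Finset.coe_univ, Set.image_univ]
      rintro y ⟨m, rfl⟩; exact htH m
    obtain ⟨ξ, hξ⟩ := (memu (haH i) (haH j) (ha i j hij)).1 hx1
    obtain ⟨η, hη⟩ := (memu (haH k) (haH l) (ha k l hkl)).1 hx2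
    have hd := hhom sa st hca hct hsaH hstH
    have hcomp := congrFun (congrFun (congrFun (congrFun (congrFun (congrFun hd i) j) k) l) ξ) η
    have hsa : ∃ (h : sa.card = 4), ∃ y : Ordinal,
        F (sa.orderEmbOfFin h i) (sa.orderEmbOfFin h j) ξ = some y ∧
        F (sa.orderEmbOfFin h k) (sa.orderEmbOfFin h l) η = some y := by
      refine ⟨hca, x, ?_, ?_⟩
      · rw [hea]; exact hξ
      · rw [hea]; exact hη
    have hst' : ∃ (h : st.card = 4), ∃ y : Ordinal,
        F (st.orderEmbOfFin h i) (st.orderEmbOfFin h j) ξ = some y ∧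
        F (st.orderEmbOfFin h k) (st.orderEmbOfFin h l) η = some y :=
      (Eq.to_iff hcomp).mp hsa
    obtain ⟨hct', y, h1', h2'⟩ := hst'
    have h1'' : F (t i) (t j) ξ = some y := by rw [← het]; exact h1'
    have h2'' : F (t k) (t l) η = some y := by rw [← het]; exact h2'
    rw [hti, htj, hξ] at h1''
    have hyx : y = x := by injection h1''.symm
    subst hyx
    exact (memu (htH k) (htH l) (ht k l hkl)).2 ⟨η, h2''⟩

  -- unboundedness of H
  have hordlim : Order.IsSuccLimit (Cardinal.ord ν) := Cardinal.isSuccLimit_ord hν.le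
  have hIic : ∀ γ : Ordinal, γ < ν.ord → #(Set.Iic γ) < Cardinal.lift.{1} ν := by
    intro γ hγ
    rw [← Order.Iio_succ, Ordinal.mk_Iio_ordinal]
    exact Cardinal.lift_lt.2 (Cardinal.lt_ord.1 (hordlim.succ_lt hγ))
  have EX : ∀ γ : Ordinal, γ < ν.ord → ∃ δ ∈ H, γ < δ := by
    intro γ hγ
    by_contra hcon
    push_neg at hcon
    have hsub : H ⊆ Set.Iic γ := fun δ hδ => hcon δ hδ
    have h1 : #H ≤ #(Set.Iic γ) := Cardinal.mk_le_mk_of_subset hsub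
    rw [hHcard] at h1
    exact absurd h1 (not_le.2 (hIic γ hγ))
  have EX2 : ∀ p q : Ordinal, p < ν.ord → q < ν.ord → ∃ δ ∈ H, p < δ ∧ q < δ := by
    intro p q hp hq
    obtain ⟨δ, hδH, hδ⟩ := EX (max p q) (max_lt hp hq)
    exact ⟨δ, hδH, (le_max_left _ _).trans_lt hδ, (le_max_right _ _).trans_lt hδ⟩
  -- two base points and the set B
  have hne0 : H.Nonempty := by
    rw [← Set.nonempty_coe_sort, ← Cardinal.mk_ne_zero_iff, hHcard]
    simp [Cardinal.lift_eq_zero]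
    rintro rfl
    exact absurd hν (by simp)
  obtain ⟨a0, ha0H⟩ := hne0
  obtain ⟨a1, ha1H, ha01⟩ := EX a0 (hlt ha0H)
  set B : Set Ordinal := {z | z ∈ H ∧ a1 < z} with hBdef
  have hBH : ∀ {z : Ordinal}, z ∈ B → z ∈ H := fun hz => hz.1
  have hBa1 : ∀ {z : Ordinal}, z ∈ B → a1 < z := fun hz => hz.2
  have hBa0 : ∀ {z : Ordinal}, z ∈ B → a0 < z := fun hz => ha01.trans hz.2
  have hBν : B ⊆ Set.Iio ν.ord := fun z hz => hHsub hz.1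
  have hBcard : #B = Cardinal.lift.{1} ν := by
    refine le_antisymm ((Cardinal.mk_le_mk_of_subset (fun z hz => hBH hz)).trans_eq hHcard) ?_
    by_contra hltB
    push_neg at hltB
    have hsplit : H ⊆ B ∪ Set.Iic a1 := by
      intro z hz
      rcases le_or_gt z a1 with h | h
      · exact Or.inr h
      · exact Or.inl ⟨hz, h⟩
    have : Cardinal.lift.{1} ν ≤ #(B ∪ Set.Iic a1 : Set Ordinal) :=
      hHcard ▸ Cardinal.mk_le_mk_of_subset hsplit
    have h2 : #(B ∪ Set.Iic a1 : Set Ordinal) ≤ #B + #(Set.Iic a1) :=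
      Cardinal.mk_union_le _ _
    have h3 : #B + #(Set.Iic a1) < Cardinal.lift.{1} ν :=
      Cardinal.add_lt_of_lt (Cardinal.aleph0_le_lift.2 hν.le) hltB (hIic a1 (hlt ha1H))
    exact absurd (this.trans h2) (not_le.2 h3)
  -- the roots
  set Vp : Ordinal → Set Ordinal := fun α => {x | ∀ γ ∈ H, α < γ → x ∈ u α γ} with hVpdef
  set Vm : Ordinal → Set Ordinal := fun β => {x | ∀ e ∈ H, e < β → x ∈ u e β} with hVmdef
  -- Fact A : row spreading
  have FA : ∀ a b b' c x : Ordinal, a ∈ H → b ∈ H → b' ∈ H → c ∈ H → a < b → b < b' →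
      a < c → x ∈ u a b → x ∈ u a b' → x ∈ u a c := by
    intro a b b' c x haH hbH hb'H hcH hab hbb' hac hx1 hx2
    obtain ⟨δ, hδH, hδb', hδc⟩ := EX2 b' c (hlt hb'H) (hlt hcH)
    rcases lt_trichotomy c b' with h | h | h
    · exact key (mk4 a b b' δ) (mk4 a c b' δ)
        (mk4_lt hab hbb' hδb') (mk4_lt hac h hδb')
        (mk4_mem haH hbH hb'H hδH) (mk4_mem haH hcH hb'H hδH)
        0 2 0 1 (by decide) (by decide) rfl rfl x hx2 hx1
    · rw [h]; exact hx2
    · exact key (mk4 a b b' δ) (mk4 a b c δ)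
        (mk4_lt hab hbb' hδb') (mk4_lt hab (hbb'.trans h) hδc)
        (mk4_mem haH hbH hb'H hδH) (mk4_mem haH hbH hcH hδH)
        0 1 0 2 (by decide) (by decide) rfl rfl x hx1 hx2
  -- Fact B : column spreading
  have FB : ∀ a a' b c x : Ordinal, a ∈ H → a' ∈ H → b ∈ H → c ∈ H → a < a' → a' < b →
      c < b → x ∈ u a b → x ∈ u a' b → x ∈ u c b := by
    intro a a' b c x haH ha'H hbH hcH haa' ha'b hcb hx1 hx2
    obtain ⟨δ, hδH, hδb⟩ := EX b (hlt hbH)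
    rcases lt_trichotomy c a' with h | h | h
    · exact key (mk4 a a' b δ) (mk4 c a' b δ)
        (mk4_lt haa' ha'b hδb) (mk4_lt h ha'b hδb)
        (mk4_mem haH ha'H hbH hδH) (mk4_mem hcH ha'H hbH hδH)
        1 2 0 2 (by decide) (by decide) rfl rfl x hx2 hx1
    · rw [h]; exact hx2
    · exact key (mk4 a a' b δ) (mk4 a c b δ)
        (mk4_lt haa' ha'b hδb) (mk4_lt (haa'.trans h) hcb hδb)
        (mk4_mem haH ha'H hbH hδH) (mk4_mem haH hcH hbH hδH)
        0 2 1 2 (by decide) (by decide) rfl rfl x hx1 hx2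
  -- Fact M : full spreading from two separated pairs
  have FM : ∀ a b c d x : Ordinal, a ∈ H → b ∈ H → c ∈ H → d ∈ H →
      a < b → b < c → c < d → x ∈ u a b → x ∈ u c d →
      ∀ e g : Ordinal, e ∈ H → g ∈ H → e < g → x ∈ u e g := by
    intro a b c d x haH hbH hcH hdH hab hbc hcd hxab hxcd
    have step1 : ∀ c' d' : Ordinal, c' ∈ H → d' ∈ H → b < c' → c' < d' → x ∈ u c' d' := by
      intro c' d' hc'H hd'H h1 h2
      exact key (mk4 a b c d) (mk4 a b c' d')
        (mk4_lt hab hbc hcd) (mk4_lt hab h1 h2)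
        (mk4_mem haH hbH hcH hdH) (mk4_mem haH hbH hc'H hd'H)
        0 1 2 3 (by decide) (by decide) rfl rfl x hxab hxcd
    intro e g heH hgH heg
    obtain ⟨c', hc'H, hbc', hgc'⟩ := EX2 b g (hlt hbH) (hlt hgH)
    obtain ⟨d', hd'H, hc'd'⟩ := EX c' (hlt hc'H)
    have hx' : x ∈ u c' d' := step1 c' d' hc'H hd'H hbc' hc'd'
    exact key (mk4 a b c' d') (mk4 e g c' d')
      (mk4_lt hab hbc' hc'd') (mk4_lt heg hgc' hc'd')
      (mk4_mem haH hbH hc'H hd'H) (mk4_mem heH hgH hc'H hd'H)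
      2 3 0 1 (by decide) (by decide) rfl rfl x hx' hxab

  -- spreading for the roots
  have VpVp : ∀ a a' x : Ordinal, a ∈ B → a' ∈ B → a ≠ a' → x ∈ Vp a → x ∈ Vp a' →
      ∀ γ ∈ B, x ∈ Vp γ := by
    have main : ∀ a a' x : Ordinal, a ∈ B → a' ∈ B → a < a' → x ∈ Vp a → x ∈ Vp a' →
        ∀ γ ∈ B, x ∈ Vp γ := by
      intro a a' x haB ha'B haa' hp hp' γ hγB δ hδH hγδ
      obtain ⟨c, hcH, hc1, hc2⟩ := EX2 a' δ (hlt (hBH ha'B)) (hlt hδH)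
      obtain ⟨c', hc'H, hcc'⟩ := EX c (hlt hcH)
      have hac : a < c := haa'.trans hc1
      have hac' : a < c' := hac.trans hcc'
      have hxγc : x ∈ u γ c := FB a a' c γ x (hBH haB) (hBH ha'B) hcH (hBH hγB)
        haa' hc1 (hγδ.trans hc2) (hp c hcH hac) (hp' c hcH hc1)
      have hxγc' : x ∈ u γ c' := FB a a' c' γ x (hBH haB) (hBH ha'B) hc'H (hBH hγB)
        haa' (hc1.trans hcc') ((hγδ.trans hc2).trans hcc') (hp c' hc'H hac') (hp' c' hc'H (hc1.trans hcc'))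
      exact FA γ c c' δ x (hBH hγB) hcH hc'H hδH (hγδ.trans hc2) hcc' hγδ hxγc hxγc'
    intro a a' x haB ha'B hne hp hp'
    rcases hne.lt_or_gt with h | h
    · exact main a a' x haB ha'B h hp hp'
    · exact main a' a x ha'B haB h hp' hp
  have VmVm : ∀ b b' x : Ordinal, b ∈ B → b' ∈ B → b ≠ b' → x ∈ Vm b → x ∈ Vm b' →
      ∀ γ ∈ B, x ∈ Vm γ := by
    have main : ∀ b b' x : Ordinal, b ∈ B → b' ∈ B → b < b' → x ∈ Vm b → x ∈ Vm b' →
        ∀ γ ∈ B, x ∈ Vm γ := by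
      intro b b' x hbB hb'B hbb' hm hm' γ hγB e heH heγ
      have hx0b : x ∈ u a0 b := hm a0 ha0H (hBa0 hbB)
      have hx0b' : x ∈ u a0 b' := hm' a0 ha0H (hBa0 hb'B)
      have hx1b : x ∈ u a1 b := hm a1 ha1H (hBa1 hbB)
      have hx1b' : x ∈ u a1 b' := hm' a1 ha1H (hBa1 hb'B)
      have hrow0 : x ∈ u a0 γ := FA a0 b b' γ x ha0H (hBH hbB) (hBH hb'B) (hBH hγB)
        (hBa0 hbB) hbb' (hBa0 hγB) hx0b hx0b'
      have hrow1 : x ∈ u a1 γ := FA a1 b b' γ x ha1H (hBH hbB) (hBH hb'B) (hBH hγB)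
        (hBa1 hbB) hbb' (hBa1 hγB) hx1b hx1b'
      exact FB a0 a1 γ e x ha0H ha1H (hBH hγB) heH ha01 (hBa1 hγB) heγ hrow0 hrow1
    intro b b' x hbB hb'B hne hm hm'
    rcases hne.lt_or_gt with h | h
    · exact main b b' x hbB hb'B h hm hm'
    · exact main b' b x hb'B hbB h hm' hm
  have VmVp : ∀ a a' x : Ordinal, a ∈ B → a' ∈ B → a ≠ a' → x ∈ Vm a → x ∈ Vp a' →
      ∀ γ ∈ B, x ∈ Vm γ := by
    intro a a' x haB ha'B hne hm hp γ hγB e heH heγ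
    have hx0a : x ∈ u a0 a := hm a0 ha0H (hBa0 haB)
    have hx1a : x ∈ u a1 a := hm a1 ha1H (hBa1 haB)
    rcases hne.lt_or_gt with h | h
    · -- a < a' : full spreading
      obtain ⟨δ, hδH, hδ⟩ := EX a' (hlt (hBH ha'B))
      have hxd : x ∈ u a' δ := hp δ hδH hδ
      exact FM a0 a a' δ x ha0H (hBH haB) (hBH ha'B) hδH (hBa0 haB) h hδ hx0a hxd
        e γ heH (hBH hγB) heγ
    · -- a' < a
      obtain ⟨δ1, hδ1H, hδ1⟩ := EX a (hlt (hBH haB))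
      obtain ⟨δ2, hδ2H, hδ2⟩ := EX δ1 (hlt hδ1H)
      have hxd2 : x ∈ u a' δ2 := hp δ2 hδ2H (h.trans (hδ1.trans hδ2))
      have h0δ1 : x ∈ u a0 δ1 :=
        key (mk4 a0 a' a δ2) (mk4 a0 a' δ1 δ2)
          (mk4_lt (hBa0 ha'B) h (hδ1.trans hδ2)) (mk4_lt (hBa0 ha'B) (h.trans hδ1) hδ2)
          (mk4_mem ha0H (hBH ha'B) (hBH haB) hδ2H) (mk4_mem ha0H (hBH ha'B) hδ1H hδ2H)
          1 3 0 2 (by decide) (by decide) rfl rfl x hxd2 hx0a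
      have h1δ1 : x ∈ u a1 δ1 :=
        key (mk4 a1 a' a δ2) (mk4 a1 a' δ1 δ2)
          (mk4_lt (hBa1 ha'B) h (hδ1.trans hδ2)) (mk4_lt (hBa1 ha'B) (h.trans hδ1) hδ2)
          (mk4_mem ha1H (hBH ha'B) (hBH haB) hδ2H) (mk4_mem ha1H (hBH ha'B) hδ1H hδ2H)
          1 3 0 2 (by decide) (by decide) rfl rfl x hxd2 hx1a
      have hrow0 : x ∈ u a0 γ := FA a0 a δ1 γ x ha0H (hBH haB) hδ1H (hBH hγB)
        (hBa0 haB) hδ1 (hBa0 hγB) hx0a h0δ1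
      have hrow1 : x ∈ u a1 γ := FA a1 a δ1 γ x ha1H (hBH haB) hδ1H (hBH hγB)
        (hBa1 haB) hδ1 (hBa1 hγB) hx1a h1δ1
      exact FB a0 a1 γ e x ha0H ha1H (hBH hγB) heH ha01 (hBa1 hγB) heγ hrow0 hrow1

  -- the core of condition (4)
  have main4 : ∀ α β α' β' x : Ordinal, α ∈ B → β ∈ B → α' ∈ B → β' ∈ B →
      α < β → α' < β' → α < α' → x ∈ u α β → x ∈ u α' β' →
      x ∈ Vp α ∨ x ∈ Vm β ∨ x ∈ Vp α' ∨ x ∈ Vm β' := by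
    intro α β α' β' x hαB hβB hα'B hβ'B hαβ hα'β' hαα' hx1 hx2
    rcases lt_trichotomy β α' with h | h | h
    · -- β < α' : full spreading, x ∈ Vp α
      refine Or.inl ?_
      intro γ hγH hαγ
      exact FM α β α' β' x (hBH hαB) (hBH hβB) (hBH hα'B) (hBH hβ'B) hαβ h hα'β' hx1 hx2
        α γ (hBH hαB) hγH hαγ
    · -- β = α' : x ∈ Vm β
      subst h
      refine Or.inr (Or.inl ?_)
      intro e heH heβ
      obtain ⟨δ, hδH, hδ⟩ := EX β' (hlt (hBH hβ'B))
      exact key (mk4 α β β' δ) (mk4 e β β' δ)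
        (mk4_lt hαβ hα'β' hδ) (mk4_lt heβ hα'β' hδ)
        (mk4_mem (hBH hαB) (hBH hβB) (hBH hβ'B) hδH) (mk4_mem heH (hBH hβB) (hBH hβ'B) hδH)
        1 2 0 1 (by decide) (by decide) rfl rfl x hx2 hx1
    · -- α' < β
      rcases lt_trichotomy β β' with h2 | h2 | h2
      · -- α < α' < β < β' : x ∈ Vp α'
        refine Or.inr (Or.inr (Or.inl ?_))
        have hrow : ∀ δ : Ordinal, δ ∈ H → β < δ → x ∈ u α' δ := by
          intro δ hδH hβδ
          exact key (mk4 α α' β β') (mk4 α α' β δ)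
            (mk4_lt hαα' h h2) (mk4_lt hαα' h hβδ)
            (mk4_mem (hBH hαB) (hBH hα'B) (hBH hβB) (hBH hβ'B))
            (mk4_mem (hBH hαB) (hBH hα'B) (hBH hβB) hδH)
            0 2 1 3 (by decide) (by decide) rfl rfl x hx1 hx2
        intro γ hγH hα'γ
        obtain ⟨δ1, hδ1H, hδ1⟩ := EX β (hlt (hBH hβB))
        obtain ⟨δ2, hδ2H, hδ2⟩ := EX δ1 (hlt hδ1H)
        exact FA α' δ1 δ2 γ x (hBH hα'B) hδ1H hδ2H hγH (h.trans hδ1) hδ2 hα'γ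
          (hrow δ1 hδ1H hδ1) (hrow δ2 hδ2H (hδ1.trans hδ2))
      · -- β = β' : x ∈ Vm β
        subst h2
        refine Or.inr (Or.inl ?_)
        intro e heH heβ
        exact FB α α' β e x (hBH hαB) (hBH hα'B) (hBH hβB) heH hαα' h heβ hx1 hx2
      · -- α < α' < β' < β : x ∈ Vm β
        refine Or.inr (Or.inl ?_)
        have hcol : ∀ e : Ordinal, e ∈ H → e < α' → x ∈ u e β := by
          intro e heH heα'
          exact key (mk4 α α' β' β) (mk4 e α' β' β)
            (mk4_lt hαα' hα'β' h2) (mk4_lt heα' hα'β' h2)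
            (mk4_mem (hBH hαB) (hBH hα'B) (hBH hβ'B) (hBH hβB))
            (mk4_mem heH (hBH hα'B) (hBH hβ'B) (hBH hβB))
            1 2 0 3 (by decide) (by decide) rfl rfl x hx2 hx1
        intro e heH heβ
        exact FB a0 a1 β e x ha0H ha1H (hBH hβB) heH ha01 (hBa1 hβB) heβ
          (hcol a0 ha0H (hBa0 hα'B)) (hcol a1 ha1H (hBa1 hα'B))
  -- assemble the conclusion
  refine ⟨B, Vp, Vm, hBν, hBcard, ?_, ?_, ?_, ?_, ?_, ?_⟩
  · -- (1)
    have main : ∀ α β β' : Ordinal, α ∈ B → β ∈ B → β' ∈ B → α < β → β < β' →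
        u α β ∩ u α β' = Vp α := by
      intro α β β' hαB hβB hβ'B hαβ hββ'
      ext x
      constructor
      · rintro ⟨hx1, hx2⟩ γ hγH hαγ
        exact FA α β β' γ x (hBH hαB) (hBH hβB) (hBH hβ'B) hγH hαβ hββ' hαγ hx1 hx2
      · intro hx
        exact ⟨hx β (hBH hβB) hαβ, hx β' (hBH hβ'B) (hαβ.trans hββ')⟩
    intro α hα β hβ β' hβ' hαβ hαβ' hne
    rcases hne.lt_or_gt with h | h
    · exact main α β β' hα hβ hβ' hαβ h
    · rw [Set.inter_comm]; exact main α β' β hα hβ' hβ hαβ' h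
  · -- (2)
    have main : ∀ β α α' : Ordinal, β ∈ B → α ∈ B → α' ∈ B → α < α' → α' < β →
        u α β ∩ u α' β = Vm β := by
      intro β α α' hβB hαB hα'B hαα' hα'β
      ext x
      constructor
      · rintro ⟨hx1, hx2⟩ e heH heβ
        exact FB α α' β e x (hBH hαB) (hBH hα'B) (hBH hβB) heH hαα' hα'β heβ hx1 hx2
      · intro hx
        exact ⟨hx α (hBH hαB) (hαα'.trans hα'β), hx α' (hBH hα'B) hα'β⟩
    intro β hβ α hα α' hα' hαβ hα'β hne
    rcases hne.lt_or_gt with h | h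
    · exact main β α α' hβ hα hα' h hα'β
    · rw [Set.inter_comm]; exact main β α' α hβ hα' hα h hαβ
  · -- (3) for Vp
    refine ⟨{x | ∀ γ ∈ B, x ∈ Vp γ}, ?_⟩
    intro α hα α' hα' hne
    ext x
    constructor
    · rintro ⟨hx, hx'⟩
      exact VpVp α α' x hα hα' hne hx hx'
    · intro hx
      exact ⟨hx α hα, hx α' hα'⟩
  · -- (3) for Vm
    refine ⟨{x | ∀ γ ∈ B, x ∈ Vm γ}, ?_⟩
    intro α hα α' hα' hne
    ext x
    constructor
    · rintro ⟨hx, hx'⟩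
      exact VmVm α α' x hα hα' hne hx hx'
    · intro hx
      exact ⟨hx α hα, hx α' hα'⟩
  · -- (3) for Vm ∪ Vp
    refine ⟨{x | ∀ γ ∈ B, x ∈ Vm γ} ∪ {x | ∀ γ ∈ B, x ∈ Vp γ}, ?_⟩
    intro α hα α' hα' hne
    ext x
    constructor
    · rintro ⟨hx | hx, hx' | hx'⟩
      · exact Or.inl (VmVm α α' x hα hα' hne hx hx')
      · exact Or.inl (VmVp α α' x hα hα' hne hx hx')
      · exact Or.inl (VmVp α' α x hα' hα hne.symm hx' hx)
      · exact Or.inr (VpVp α α' x hα hα' hne hx hx')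
    · rintro (hx | hx)
      · exact ⟨Or.inl (hx α hα), Or.inl (hx α' hα')⟩
      · exact ⟨Or.inr (hx α hα), Or.inr (hx α' hα')⟩
  · -- (4)
    intro α hα β hβ α' hα' β' hβ' hαβ hα'β' hne
    rw [Set.eq_empty_iff_forall_notMem]
    rintro x ⟨⟨hx1, hn1⟩, ⟨hx2, hn2⟩⟩
    rcases lt_trichotomy α α' with h | h | h
    · rcases main4 α β α' β' x hα hβ hα' hβ' hαβ hα'β' h hx1 hx2 with hc | hc | hc | hc
      · exact hn1 (Or.inl hc)
      · exact hn1 (Or.inr hc)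
      · exact hn2 (Or.inl hc)
      · exact hn2 (Or.inr hc)
    · subst h
      have hβne : β ≠ β' := by
        intro hbe
        exact hne (by rw [hbe])
      refine hn1 (Or.inl ?_)
      intro γ hγH hαγ
      rcases hβne.lt_or_gt with h2 | h2
      · exact FA α β β' γ x (hBH hα) (hBH hβ) (hBH hβ') hγH hαβ h2 hαγ hx1 hx2
      · exact FA α β' β γ x (hBH hα) (hBH hβ') (hBH hβ) hγH hα'β' h2 hαγ hx2 hx1
    · rcases main4 α' β' α β x hα' hβ' hα hβ hα'β' hαβ h hx2 hx1 with hc | hc | hc | hc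
      · exact hn2 (Or.inl hc)
      · exact hn2 (Or.inr hc)
      · exact hn1 (Or.inl hc)
      · exact hn1 (Or.inr hc)
end

section
/- Assume the continuum hypothesis, 2^{ℵ₀} = ℵ₁. Then ℵ₂ →_hc (ℵ₁)²_{ℵ₀} holds: for every coloring c : [ℵ₂]² → ω there exist a color i < ω and a set A ⊆ ℵ₂ with |A| = ℵ₁ such that the i-monochromatic graph on A is highly connected (i.e., ℵ₁-connected). -/
open Cardinal

/-- Codes for the elements of a subset of `V` closed under countably-indexed
witness functions `(ℕ → V) → Set (ℕ × K) → V`.  Taking the image of all codes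
under evaluation yields a "Skolem hull" of size at most `ℵ₁` (under CH), with
no need for a transfinite recursion of length `ω₁`. -/
inductive ERCode (K : Type) : Type where
  | base : ERCode K
  | node : (ℕ → ERCode K) → Set (ℕ × K) → ERCode K

namespace ERCode

/-- Encoding of codes into any type `T` admitting an injection
`((ℕ → T) × Set (ℕ × K)) ⊕ Unit ↪ T`; used to bound the cardinality of `ERCode K`. -/
noncomputable def encode {K T : Type} (j : ((ℕ → T) × Set (ℕ × K)) ⊕ Unit ↪ T) :
    ERCode K → T
  | .base => j (Sum.inr ())
  | .node g R => j (Sum.inl (fun n => (g n).encode j, R))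

theorem encode_injective {K T : Type} (j : ((ℕ → T) × Set (ℕ × K)) ⊕ Unit ↪ T) :
    Function.Injective (encode j) := by
  intro a
  induction a with
  | base =>
    intro b h
    cases b with
    | base => rfl
    | node g R => simpa using j.injective h
  | node g R ih =>
    intro b h
    cases b with
    | base => simpa using j.injective h
    | node g' R' =>
      have h' := j.injective h
      simp only [Sum.inl.injEq, Prod.mk.injEq] at h'
      obtain ⟨h1, h2⟩ := h'
      have hg : g = g' := funext fun n => ih n (congrFun h1 n)
      rw [hg, h2]

/-- Evaluation of codes in `V`, relative to a witness function `F` and a basepoint. -/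
noncomputable def eval {V K : Type} (F : (ℕ → V) → Set (ℕ × K) → V) (v₀ : V) :
    ERCode K → V
  | .base => v₀
  | .node g R => F (fun n => (g n).eval F v₀) R

/-- Under CH, there are at most `ℵ₁` codes. -/
theorem mk_le {K : Type} (hK : #K = ℵ₀) (hCH : (2 : Cardinal.{0}) ^ ℵ₀ = aleph 1) :
    #(ERCode K) ≤ aleph 1 := by
  set T : Type := (aleph 1 : Cardinal).out with hTdef
  have hT : #T = aleph 1 := mk_out _
  have hpow : (aleph 1 : Cardinal) ^ (ℵ₀ : Cardinal) = aleph 1 := by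
    rw [← hCH, ← power_mul, aleph0_mul_aleph0]
  have hcard : #(((ℕ → T) × Set (ℕ × K)) ⊕ Unit) ≤ #T := by
    have h1 : #(ℕ → T) = aleph 1 := by
      rw [← power_def, hT, mk_nat]; exact hpow
    have h2 : #(Set (ℕ × K)) = aleph 1 := by
      rw [mk_set]
      have : #(ℕ × K) = ℵ₀ := by
        rw [mk_prod, mk_nat, hK]; simp
      rw [this, hCH]
    rw [mk_sum, mk_prod, h1, h2, hT]
    simp only [lift_id]
    rw [mul_eq_self (aleph0_le_aleph 1), mk_eq_one, add_one_eq (aleph0_le_aleph 1)]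
  obtain ⟨j⟩ := (le_def _ _).mp hcard
  calc #(ERCode K) ≤ #T := mk_le_of_injective (encode_injective j)
    _ = aleph 1 := hT

end ERCode

/-- The "greedy" set of elements of `M` resembling `α` (relative to the
coloring `cc`), defined by well-founded recursion along `r`:  an element `β`
of `M` belongs to the set iff it matches `α` on all earlier members. -/
def greedySet {V K : Type} (r : V → V → Prop) (wf : WellFounded r)
    (M : Set V) (cc : V → V → K) (α : V) : V → Prop :=
  wf.fix fun β ih => β ∈ M ∧ ∀ γ (h : r γ β), ih γ h → cc γ β = cc γ α

theorem greedySet_iff {V K : Type} (r : V → V → Prop) (wf : WellFounded r)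
    (M : Set V) (cc : V → V → K) (α : V) (β : V) :
    greedySet r wf M cc α β ↔
      (β ∈ M ∧ ∀ γ, r γ β → greedySet r wf M cc α γ → cc γ β = cc γ α) :=
  iff_of_eq (wf.fix_eq _ β)

/-- Assuming the continuum hypothesis `2^ℵ₀ = ℵ₁`, the relation
`ℵ₂ →_hc (ℵ₁)²_{ℵ₀}` holds. -/
theorem stmt11 (hCH : 2 ^ ℵ₀ = aleph 1) :
    ArrowHC (aleph 2) (aleph 1) ℵ₀ := by
  -- transfer CH down to universe 0
  have hCH0 : (2 : Cardinal.{0}) ^ ℵ₀ = aleph 1 := by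
    apply lift_injective
    rw [lift_power, lift_two, lift_aleph0, lift_aleph]
    rw [show Ordinal.lift (1 : Ordinal) = 1 by simp]
    exact hCH
  intro V K hV hK c
  haveI hVne : Nonempty V := mk_ne_zero_iff.1 (by rw [hV]; exact (aleph_pos 2).ne')
  haveI hKcount : Countable K := mk_le_aleph0_iff.1 hK.le
  let cc : V → V → K := fun a b => c s(a, b)
  have ccsymm : ∀ a b : V, cc a b = cc b a := fun a b => by
    show c s(a, b) = c s(b, a)
    rw [Sym2.eq_swap]
  have v₀ : V := Classical.arbitrary V
  -- the countably-indexed witness function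
  obtain ⟨F, hFspec⟩ :
      ∃ F : (ℕ → V) → Set (ℕ × K) → V, ∀ (e : ℕ → V) (R : Set (ℕ × K)),
        (∃ β, β ∉ Set.range e ∧ ∀ n k, (n, k) ∈ R → cc (e n) β = k) →
        F e R ∉ Set.range e ∧ ∀ n k, (n, k) ∈ R → cc (e n) (F e R) = k := by
    classical
    refine ⟨fun e R => Classical.epsilon
      (fun β => β ∉ Set.range e ∧ ∀ n k, (n, k) ∈ R → cc (e n) β = k),
      fun e R h => ?_⟩
    exact Classical.epsilon_spec h
  -- the Skolem hull
  let M : Set V := Set.range (ERCode.eval F v₀)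
  have hv₀M : v₀ ∈ M := ⟨ERCode.base, rfl⟩
  have hMcard : #M ≤ aleph 1 := mk_range_le.trans (ERCode.mk_le hK hCH0)
  -- closure of the hull under countably-indexed witnessing
  have hclosure : ∀ H : Set V, H ⊆ M → H.Countable → ∀ t : V → K,
      (∃ β, β ∉ H ∧ ∀ γ ∈ H, cc γ β = t γ) →
      ∃ β, β ∈ M ∧ β ∉ H ∧ ∀ γ ∈ H, cc γ β = t γ := by
    rintro H hHM hHc t ⟨β₀, hβ₀, hm₀⟩
    rcases H.eq_empty_or_nonempty with hE | hne
    · exact ⟨v₀, hv₀M, by simp [hE]⟩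
    obtain ⟨e, he⟩ := hHc.exists_eq_range hne
    have hcode : ∀ n, ∃ cd : ERCode K, ERCode.eval F v₀ cd = e n := fun n =>
      hHM (he ▸ Set.mem_range_self n)
    choose g hg using hcode
    set R : Set (ℕ × K) := {p | p.2 = t (e p.1)} with hR
    have hEpre : ∃ β, β ∉ Set.range e ∧ ∀ n k, (n, k) ∈ R → cc (e n) β = k := by
      refine ⟨β₀, by rwa [← he], fun n k hk => ?_⟩
      have hk' : k = t (e n) := hk
      rw [hk']
      exact hm₀ (e n) (he ▸ Set.mem_range_self n)
    obtain ⟨hnotin, hmatch⟩ := hFspec e R hEpre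
    refine ⟨F e R, ?_, by rwa [he], fun γ hγ => ?_⟩
    · refine ⟨ERCode.node g R, ?_⟩
      have : ERCode.eval F v₀ (ERCode.node g R)
          = F (fun n => ERCode.eval F v₀ (g n)) R := by
        simp [ERCode.eval]
      rw [this]
      congr 1
      funext n
      exact hg n
    · rw [he] at hγ
      obtain ⟨n, rfl⟩ := hγ
      exact hmatch n (t (e n)) rfl
  -- pick a point outside the hull
  have hαex : ∃ α : V, α ∉ M := by
    by_contra h
    push_neg at h
    have hMuniv : M = Set.univ := Set.eq_univ_of_forall h
    have : #V ≤ aleph 1 := by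
      rw [← mk_univ, ← hMuniv]
      exact hMcard
    rw [hV] at this
    exact absurd this (not_le.2 (aleph_lt_aleph.2 one_lt_two))
  obtain ⟨α, hαM⟩ := hαex
  -- the greedy set of elements of `M` "resembling α", by well-founded recursion
  let r : V → V → Prop := WellOrderingRel
  have wf : WellFounded r := IsWellFounded.wf
  let memH : V → Prop := greedySet r wf M cc α
  have memiff : ∀ β, memH β ↔ (β ∈ M ∧ ∀ γ, r γ β → memH γ → cc γ β = cc γ α) :=
    fun β => greedySet_iff r wf M cc α β
  let H : Set V := {β | memH β}
  have hHM : H ⊆ M := fun β hβ => ((memiff β).1 hβ).1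
  have hHend : ∀ β γ, β ∈ H → γ ∈ H → r β γ → cc β γ = cc β α :=
    fun β γ hβ hγ hr => ((memiff γ).1 hγ).2 β hr hβ
  -- the greedy set is uncountable, by closure of the hull
  have hHunc : ¬ H.Countable := by
    intro hc
    obtain ⟨β, hβM, hβH, hmatch⟩ := hclosure H hHM hc (fun γ => cc γ α)
      ⟨α, fun h => hαM (hHM h), fun γ _ => rfl⟩
    exact hβH ((memiff β).2 ⟨hβM, fun γ _ hγ => hmatch γ hγ⟩)
  -- pigeonhole: some color class is uncountable
  have hpig : ∃ ξ : K, ¬ {β | β ∈ H ∧ cc β α = ξ}.Countable := by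
    by_contra h
    push_neg at h
    apply hHunc
    have hU : H = ⋃ ξ : K, {β | β ∈ H ∧ cc β α = ξ} := by
      ext β
      simp only [Set.mem_iUnion, Set.mem_setOf_eq]
      constructor
      · exact fun hβ => ⟨cc β α, hβ, rfl⟩
      · rintro ⟨ξ', hβ, -⟩
        exact hβ
    rw [hU]
    exact Set.countable_iUnion h
  obtain ⟨ξ, hξ⟩ := hpig
  have h1 : aleph 1 ≤ #({β | β ∈ H ∧ cc β α = ξ} : Set V) :=
    not_lt.1 fun hlt => hξ ((countable_iff_lt_aleph_one _).2 hlt)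
  obtain ⟨X, hXsub, hXcard⟩ := le_mk_iff_exists_subset.1 h1
  refine ⟨ξ, X, hXcard, ?_⟩
  have hXmem : ∀ a ∈ X, a ∈ H ∧ cc a α = ξ := fun a ha => hXsub ha
  -- `X` is monochromatic in color ξ
  have hmono : ∀ a b : V, a ∈ X → b ∈ X → a ≠ b → c s(a, b) = ξ := by
    intro a b ha hb hab
    obtain ⟨haH, haξ⟩ := hXmem a ha
    obtain ⟨hbH, hbξ⟩ := hXmem b hb
    rcases trichotomous_of r a b with h | h | h
    · rw [show c s(a, b) = cc a b from rfl, hHend a b haH hbH h, haξ]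
    · exact absurd h hab
    · rw [show c s(a, b) = cc a b from rfl, ccsymm a b, hHend b a hbH haH h, hbξ]
  -- high connectivity: the graph on `X` is complete, so removing `< ℵ₁`
  -- vertices leaves a nonempty complete graph
  intro S hSX hScard
  rw [SimpleGraph.connected_iff]
  constructor
  · intro u v
    by_cases huv : u = v
    · subst huv
      exact SimpleGraph.Reachable.refl u
    · have hne : (u : V) ≠ (v : V) := fun h' => huv (Subtype.ext h')
      apply SimpleGraph.Adj.reachable
      show ((u : V) ≠ (v : V)) ∧ c s((u : V), (v : V)) = ξ
      exact ⟨hne, hmono u v u.2.1 v.2.1 hne⟩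
  · have hnot : ¬ X ⊆ S := by
      intro h
      have hle := mk_le_mk_of_subset h
      rw [hXcard] at hle
      exact absurd hScard (not_lt.2 hle)
    obtain ⟨x, hxX, hxS⟩ := Set.not_subset.1 hnot
    exact ⟨⟨x, hxX, hxS⟩⟩
end
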